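/- Let (Ω, 𝓕, P) be a probability space and B : [0,1] × Ω → ℝ a standard Brownian motion: B_0 = 0 almost surely, for 0 ≤ s ≤ t ≤ 1 the increment B_t − B_s is independent of (B_r)_{r ≤ s} and is Gaussian with mean 0 and variance t − s, and t ↦ B_t(ω) is continuous for almost every ω. Let g : ℝ → ℝ be bounded and Lipschitz. For n ∈ ℕ let t_i = i/n be the uniform partition of [0,1]. Then ∑_{i=0}^{n−1} g(B_{t_i}) (B_{t_{i+1}} − B_{t_i})² converges in L²(P), as n → ∞, to ∫_0^1 g(B_t) dt. -/

import Mathlib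

open Filter Finset MeasureTheory ProbabilityTheory

section BrownianAux

open Real Set
open scoped NNReal ENNReal

lemma intg_pow_exp {b : ℝ} (hb : 0 < b) (n : ℕ) :
    Integrable (fun x : ℝ => x ^ n * Real.exp (-b * x ^ 2)) := by
  have h := integrable_rpow_mul_exp_neg_mul_sq hb (s := (n : ℝ)) (by exact lt_of_lt_of_le neg_one_lt_zero (Nat.cast_nonneg n))
  simpa [Real.rpow_natCast] using h

lemma ioi_rec {b : ℝ} (hb : 0 < b) (m : ℕ) :
    ∫ x in Ioi (0:ℝ), x ^ (m + 2) * Real.exp (-b * x ^ 2)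
      = ((m + 1 : ℝ) / (2 * b)) * ∫ x in Ioi (0:ℝ), x ^ m * Real.exp (-b * x ^ 2) := by
  set f : ℝ → ℝ := fun x => -(1 / (2 * b)) * (x ^ (m + 1) * Real.exp (-b * x ^ 2)) with hf
  set f' : ℝ → ℝ := fun x =>
    x ^ (m + 2) * Real.exp (-b * x ^ 2)
      - ((m + 1 : ℝ) / (2 * b)) * (x ^ m * Real.exp (-b * x ^ 2)) with hf'
  have hderiv : ∀ x ∈ Ici (0:ℝ), HasDerivAt f (f' x) x := by
    intro x _
    have h1 : HasDerivAt (fun x : ℝ => x ^ (m + 1)) ((m + 1 : ℝ) * x ^ m) x := by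
      simpa using hasDerivAt_pow (m + 1) x
    have h2 : HasDerivAt (fun x : ℝ => Real.exp (-b * x ^ 2))
        (Real.exp (-b * x ^ 2) * (-b * (2 * x))) x := by
      have : HasDerivAt (fun x : ℝ => -b * x ^ 2) (-b * (2 * x)) x := by
        simpa using ((hasDerivAt_pow 2 x).const_mul (-b))
      exact this.exp
    have h3 := ((h1.mul h2).const_mul (-(1 / (2 * b))))
    refine h3.congr_deriv ?_
    simp only [hf']
    field_simp
    ring
  have hint : IntegrableOn f' (Ioi (0:ℝ)) :=
    ((intg_pow_exp hb (m+2)).sub ((intg_pow_exp hb m).const_mul _)).integrableOn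
  have htend : Tendsto f atTop (nhds 0) := by
    have ho := rpow_mul_exp_neg_mul_sq_isLittleO_exp_neg hb ((m : ℝ) + 1)
    have h0 : Tendsto (fun x : ℝ => Real.exp (-(1/2) * x)) atTop (nhds 0) := by
      have hh : Tendsto (fun x : ℝ => (1/2) * x) atTop atTop :=
        Tendsto.const_mul_atTop (by norm_num) tendsto_id
      exact (Real.tendsto_exp_neg_atTop_nhds_zero.comp hh).congr
        (fun x => by simp [Function.comp, neg_mul])
    have h1 : Tendsto (fun x : ℝ => x ^ ((m:ℝ)+1) * Real.exp (-b * x ^ 2)) atTop (nhds 0) :=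
      ho.tendsto_zero_of_tendsto h0
    have h2 : Tendsto (fun x : ℝ => x ^ (m+1) * Real.exp (-b * x ^ 2)) atTop (nhds 0) := by
      refine h1.congr' ?_
      filter_upwards [eventually_ge_atTop (0:ℝ)] with x hx
      rw [show ((m:ℝ)+1) = ((m+1 : ℕ):ℝ) by push_cast; ring, Real.rpow_natCast]
    simpa [hf] using (h2.const_mul (-(1 / (2 * b))))
  have key := integral_Ioi_of_hasDerivAt_of_tendsto' hderiv hint htend
  have hf0 : f 0 = 0 := by simp [hf]
  rw [hf0, sub_zero] at key
  have hsplit : ∫ x in Ioi (0:ℝ), f' x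
      = (∫ x in Ioi (0:ℝ), x ^ (m+2) * Real.exp (-b * x ^ 2))
        - ((m + 1 : ℝ) / (2 * b)) * ∫ x in Ioi (0:ℝ), x ^ m * Real.exp (-b * x ^ 2) := by
    rw [hf']
    rw [integral_sub ((intg_pow_exp hb (m+2)).integrableOn)
      (((intg_pow_exp hb m).const_mul _).integrableOn), integral_const_mul]
  rw [hsplit] at key
  linarith

lemma whole_even (b : ℝ) (k : ℕ) :
    ∫ x : ℝ, x ^ (2 * k) * Real.exp (-b * x ^ 2)
      = 2 * ∫ x in Ioi (0:ℝ), x ^ (2 * k) * Real.exp (-b * x ^ 2) := by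
  rw [← integral_comp_abs (f := fun x => x ^ (2 * k) * Real.exp (-b * x ^ 2))]
  congr 1
  ext x
  rw [pow_mul, pow_mul, sq_abs]

lemma pdf_mul_eq {v : ℝ≥0} (n : ℕ) :
    (fun x : ℝ => gaussianPDFReal 0 v x * x ^ n)
      = fun x : ℝ => (√(2 * π * v))⁻¹ * (x ^ n * Real.exp (-(2 * (v:ℝ))⁻¹ * x ^ 2)) := by
  funext x
  simp only [gaussianPDFReal, sub_zero]
  rw [mul_assoc, mul_comm (Real.exp _)]
  congr 2
  rw [neg_div, neg_mul]
  congr 1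
  rw [div_eq_inv_mul]

lemma gauss_pow_core {v : ℝ≥0} (hv : v ≠ 0) (n : ℕ) :
    ∫ x, x ^ n ∂(gaussianReal 0 v) = ∫ x, gaussianPDFReal 0 v x * x ^ n := by
  rw [ProbabilityTheory.gaussianReal_of_var_ne_zero _ hv, ProbabilityTheory.gaussianPDF_def]
  have h : (fun x => ENNReal.ofReal (gaussianPDFReal 0 v x))
      = fun x => ((Real.toNNReal (gaussianPDFReal 0 v x) : ℝ≥0) : ℝ≥0∞) := rfl
  rw [h, integral_withDensity_eq_integral_smul
    (by exact (ProbabilityTheory.measurable_gaussianPDFReal 0 v).real_toNNReal)]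
  congr 1
  funext x
  rw [NNReal.smul_def, Real.coe_toNNReal _ (ProbabilityTheory.gaussianPDFReal_nonneg 0 v x),
    smul_eq_mul]

lemma gauss_integrable_pow {v : ℝ≥0} (hv : v ≠ 0) (n : ℕ) :
    Integrable (fun x : ℝ => x ^ n) (gaussianReal 0 v) := by
  have hvpos : (0:ℝ) < v := lt_of_le_of_ne (NNReal.coe_nonneg v) (by exact_mod_cast hv.symm)
  have hb : (0:ℝ) < (2 * (v:ℝ))⁻¹ := by positivity
  rw [ProbabilityTheory.gaussianReal_of_var_ne_zero _ hv, ProbabilityTheory.gaussianPDF_def]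
  have h : (fun x => ENNReal.ofReal (gaussianPDFReal 0 v x))
      = fun x => ((Real.toNNReal (gaussianPDFReal 0 v x) : ℝ≥0) : ℝ≥0∞) := rfl
  rw [h, integrable_withDensity_iff_integrable_smul
    (by exact (ProbabilityTheory.measurable_gaussianPDFReal 0 v).real_toNNReal)]
  have : (fun x : ℝ => (Real.toNNReal (gaussianPDFReal 0 v x) : ℝ≥0) • x ^ n)
      = fun x : ℝ => (√(2 * π * v))⁻¹ * (x ^ n * Real.exp (-(2 * (v:ℝ))⁻¹ * x ^ 2)) := by
    funext x
    rw [NNReal.smul_def, Real.coe_toNNReal _ (ProbabilityTheory.gaussianPDFReal_nonneg 0 v x),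
      smul_eq_mul]
    exact congrFun (pdf_mul_eq n) x
  rw [this]
  exact (intg_pow_exp hb n).const_mul _

lemma gauss_moments {v : ℝ≥0} (hv : v ≠ 0) :
    (∫ x, x ^ 2 ∂(gaussianReal 0 v)) = (v:ℝ)
      ∧ (∫ x, x ^ 4 ∂(gaussianReal 0 v)) = 3 * (v:ℝ) ^ 2 := by
  have hvpos : (0:ℝ) < v := lt_of_le_of_ne (NNReal.coe_nonneg v) (by exact_mod_cast hv.symm)
  set b : ℝ := (2 * (v:ℝ))⁻¹ with hbdef
  have hb : (0:ℝ) < b := by positivity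
  have hsqrt : √(2 * π * v) = √(π / b) := by
    rw [hbdef]
    congr 1
    field_simp
  have hsqrtpos : (0:ℝ) < √(2 * π * v) := Real.sqrt_pos.mpr (by positivity)
  have hI0 : ∫ x in Ioi (0:ℝ), x ^ 0 * Real.exp (-b * x ^ 2) = √(π / b) / 2 := by
    simpa using integral_gaussian_Ioi b
  have hI2 := ioi_rec hb 0
  have hI4 := ioi_rec hb 2
  simp only [Nat.cast_ofNat, Nat.cast_zero, zero_add] at hI2 hI4
  have h2 : ∫ x, x ^ 2 ∂(gaussianReal 0 v)
      = (√(2 * π * v))⁻¹ * (2 * ((1:ℝ) / (2 * b) * (√(π / b) / 2))) := by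
    rw [gauss_pow_core hv 2, pdf_mul_eq 2, integral_const_mul,
      show (2:ℕ) = 2 * 1 by norm_num, whole_even, ← hbdef]
    rw [show 2 * 1 = 0 + 2 by norm_num, ioi_rec hb 0, hI0]
    norm_num
  have h4 : ∫ x, x ^ 4 ∂(gaussianReal 0 v)
      = (√(2 * π * v))⁻¹ *
        (2 * ((2 + 1 : ℝ) / (2 * b) * ((1:ℝ) / (2 * b) * (√(π / b) / 2)))) := by
    rw [gauss_pow_core hv 4, pdf_mul_eq 4, integral_const_mul,
      show (4:ℕ) = 2 * 2 by norm_num, whole_even, ← hbdef]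
    rw [show 2 * 2 = 2 + 2 by norm_num, ioi_rec hb 2,
      show (2:ℕ) = 0 + 2 by norm_num, ioi_rec hb 0, hI0]
    push_cast
    ring
  have hbv : (1:ℝ) / (2 * b) = v := by rw [hbdef]; field_simp
  constructor
  · rw [h2, hbv, ← hsqrt]
    field_simp
    try ring
  · rw [h4, hbv, ← hsqrt]
    have : (2 + 1 : ℝ) / (2 * b) = 3 * v := by rw [hbdef]; field_simp; ring
    rw [this]
    field_simp
    try ring

lemma riemann_sum_tendsto {f : ℝ → ℝ} (hf : ContinuousOn f (Set.Icc 0 1)) :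
    Tendsto (fun n : ℕ => ∑ i ∈ Finset.range n, f ((i:ℝ)/n) * (1/(n:ℝ))) atTop
      (nhds (∫ t in (0:ℝ)..1, f t)) := by
  rw [Metric.tendsto_atTop]
  intro ε hε
  have hu : UniformContinuousOn f (Set.Icc 0 1) :=
    isCompact_Icc.uniformContinuousOn_of_continuous hf
  rw [Metric.uniformContinuousOn_iff] at hu
  obtain ⟨δ, hδ, hδ'⟩ := hu (ε/2) (by linarith)
  refine ⟨⌊1/δ⌋₊ + 1, fun n hn => ?_⟩
  have hn1 : 1 ≤ n := le_trans (Nat.le_add_left 1 _) hn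
  have hnpos : (0:ℝ) < n := by exact_mod_cast hn1
  have hinvδ : 1/(n:ℝ) < δ := by
    rw [div_lt_iff₀ hnpos]
    have h1 : (1:ℝ)/δ < n := by
      calc (1:ℝ)/δ < ⌊1/δ⌋₊ + 1 := Nat.lt_floor_add_one _
      _ ≤ n := by exact_mod_cast hn
    calc (1:ℝ) = δ * (1/δ) := by field_simp
    _ < δ * n := by exact mul_lt_mul_of_pos_left h1 hδ
  -- interval endpoints
  set a : ℕ → ℝ := fun k => (k:ℝ)/n with ha
  have hmem : ∀ k : ℕ, k ≤ n → a k ∈ Set.Icc (0:ℝ) 1 := by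
    intro k hk
    constructor
    · positivity
    · rw [ha]; rw [div_le_one hnpos]; exact_mod_cast hk
  have hsub : ∀ k : ℕ, k < n → Set.uIcc (a k) (a (k+1)) ⊆ Set.Icc 0 1 := by
    intro k hk
    have h1 : a k ≤ a (k+1) := by
      apply div_le_div_of_nonneg_right (by exact_mod_cast Nat.le_succ k) hnpos.le
    rw [Set.uIcc_of_le h1]
    intro x hx
    exact ⟨le_trans (hmem k hk.le).1 hx.1, le_trans hx.2 (hmem (k+1) hk).2⟩
  have hii : ∀ k : ℕ, k < n → IntervalIntegrable f volume (a k) (a (k+1)) := by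
    intro k hk
    exact (hf.mono (hsub k hk)).intervalIntegrable
  have hsplit : ∫ t in (0:ℝ)..1, f t = ∑ k ∈ Finset.range n, ∫ t in (a k)..(a (k+1)), f t := by
    rw [intervalIntegral.sum_integral_adjacent_intervals hii]
    congr 1
    · simp [ha]
    · rw [ha]; field_simp
  have hconst : ∀ k : ℕ, f ((k:ℝ)/n) * (1/(n:ℝ)) = ∫ _ in (a k)..(a (k+1)), f ((k:ℝ)/n) := by
    intro k
    rw [intervalIntegral.integral_const, smul_eq_mul, mul_comm]
    congr 1
    rw [ha]
    field_simp
    push_cast; ring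
  rw [Real.dist_eq, hsplit, ← Finset.sum_sub_distrib]
  have hterm : ∀ k ∈ Finset.range n,
      |(f ((k:ℝ)/n) * (1/(n:ℝ)) - ∫ t in (a k)..(a (k+1)), f t)| ≤ (ε/2) * (1/n) := by
    intro k hk
    rw [Finset.mem_range] at hk
    rw [hconst k, ← intervalIntegral.integral_sub (by
        exact intervalIntegrable_const) (hii k hk)]
    have hb : ∀ x ∈ Set.uIoc (a k) (a (k+1)), ‖f ((k:ℝ)/n) - f x‖ ≤ ε/2 := by
      intro x hx
      have hx' : x ∈ Set.Icc (0:ℝ) 1 := (hsub k hk) (Set.uIoc_subset_uIcc hx)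
      have hak : a k ∈ Set.Icc (0:ℝ) 1 := hmem k hk.le
      have hdist : dist (a k) x < δ := by
        rw [Real.dist_eq]
        have h1 : a k ≤ a (k+1) := by
          apply div_le_div_of_nonneg_right (by exact_mod_cast Nat.le_succ k) hnpos.le
        rw [Set.uIoc_of_le h1] at hx
        have : |a k - x| ≤ a (k+1) - a k := by
          rw [abs_sub_comm, abs_of_nonneg (by linarith [hx.1.le])]
          linarith [hx.2]
        have h2 : a (k+1) - a k = 1/(n:ℝ) := by rw [ha]; field_simp; push_cast; ring
        linarith [this, h2 ▸ this]
      have := hδ' (a k) hak x hx' hdist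
      rw [Real.dist_eq] at this
      exact le_of_lt this
    have := intervalIntegral.norm_integral_le_of_norm_le_const hb
    rw [Real.norm_eq_abs] at this
    refine le_trans this ?_
    have heq : |a (k+1) - a k| = 1/(n:ℝ) := by
      rw [ha]
      rw [abs_of_nonneg (by rw [div_sub_div_same]; push_cast; rw [add_sub_cancel_left]; positivity)]
      field_simp
      push_cast; ring
    rw [heq]
  calc |∑ k ∈ Finset.range n, (f ((k:ℝ)/n) * (1/(n:ℝ)) - ∫ t in (a k)..(a (k+1)), f t)|
      ≤ ∑ k ∈ Finset.range n, |(f ((k:ℝ)/n) * (1/(n:ℝ)) - ∫ t in (a k)..(a (k+1)), f t)| :=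
        Finset.abs_sum_le_sum_abs _ _
    _ ≤ ∑ _k ∈ Finset.range n, (ε/2) * (1/n) := Finset.sum_le_sum hterm
    _ = n * ((ε/2) * (1/n)) := by rw [Finset.sum_const, Finset.card_range]; ring
    _ = ε/2 := by field_simp
    _ < ε := by linarith

lemma map_pow_integral {Ω : Type*} [MeasurableSpace Ω] (P : Measure Ω)
    {X : Ω → ℝ} (hX : Measurable X) {v : ℝ≥0} (hv : v ≠ 0)
    (hmap : Measure.map X P = gaussianReal 0 v) (m : ℕ) :
    Integrable (fun ω => X ω ^ m) P
      ∧ ∫ ω, X ω ^ m ∂P = ∫ x, x ^ m ∂(gaussianReal 0 v) := by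
  have hpm : Measurable (fun x : ℝ => x ^ m) := measurable_id.pow_const m
  have h1 : Integrable (fun x : ℝ => x ^ m) (Measure.map X P) := by
    rw [hmap]; exact gauss_integrable_pow hv m
  constructor
  · exact (integrable_map_measure hpm.aestronglyMeasurable hX.aemeasurable).mp h1
  · rw [← hmap, integral_map hX.aemeasurable hpm.aestronglyMeasurable]

lemma cross_term_zero {Ω : Type*} [MeasurableSpace Ω] (P : Measure Ω) [IsProbabilityMeasure P]
    (B : ℝ → Ω → ℝ) (hmeas : ∀ t, Measurable (B t))
    (g : ℝ → ℝ) (hgcont : Continuous g) {C : ℝ} (hC : ∀ a, |g a| ≤ C)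
    {s t u u' c : ℝ} (hus : u ≤ s) (hu's : u' ≤ s)
    (hindep1 : IndepFun (fun ω => B t ω - B s ω) (fun ω => fun r : Set.Iic s => B r ω) P)
    (hint2 : Integrable (fun ω => (B t ω - B s ω)^2) P)
    (hmean : ∫ ω, (B t ω - B s ω)^2 ∂P = c)
    (hYint : Integrable (fun ω => (B u' ω - B u ω)^2) P) :
    ∫ ω, (g (B u ω) * ((B u' ω - B u ω)^2 - c))
        * (g (B s ω) * ((B t ω - B s ω)^2 - c)) ∂P = 0 := by
  set F : (Set.Iic s → ℝ) → ℝ := fun p =>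
    g (p ⟨u, Set.mem_Iic.mpr hus⟩) * g (p ⟨s, Set.mem_Iic.mpr le_rfl⟩)
      * ((p ⟨u', Set.mem_Iic.mpr hu's⟩ - p ⟨u, Set.mem_Iic.mpr hus⟩)^2 - c) with hF
  set φ : ℝ → ℝ := fun x => x^2 - c with hφ
  set W : Ω → (Set.Iic s → ℝ) := fun ω => fun r : Set.Iic s => B r ω with hW
  have hev : ∀ (x : ℝ) (hx : x ∈ Set.Iic s),
      Measurable (fun p : Set.Iic s → ℝ => p ⟨x, hx⟩) :=
    fun x hx => measurable_pi_apply _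
  have hFmeas : Measurable F := by
    apply Measurable.mul
    · exact ((hgcont.measurable.comp (hev u (Set.mem_Iic.mpr hus))).mul
        (hgcont.measurable.comp (hev s (Set.mem_Iic.mpr le_rfl))))
    · exact ((((hev u' (Set.mem_Iic.mpr hu's)).sub (hev u (Set.mem_Iic.mpr hus))).pow_const
        2).sub measurable_const)
  have hφmeas : Measurable φ := (measurable_id.pow_const 2).sub measurable_const
  have hWmeas : Measurable W := measurable_pi_lambda _ (fun r => hmeas r)
  have hIF : IndepFun (F ∘ W) (φ ∘ (fun ω => B t ω - B s ω)) P :=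
    (hindep1.comp hφmeas hFmeas).symm
  have hYint' : Integrable (fun ω => (B u' ω - B u ω)^2 - c) P :=
    hYint.sub (integrable_const c)
  have hFW : (F ∘ W) = fun ω =>
      g (B u ω) * g (B s ω) * ((B u' ω - B u ω)^2 - c) := by
    funext ω; simp [hF, hW, Function.comp]
  have hintFW : Integrable (F ∘ W) P := by
    rw [hFW]
    refine Integrable.mono' ((hYint'.abs.const_mul (C*C))) ?_ ?_
    · exact (((hgcont.measurable.comp (hmeas u)).mul
        (hgcont.measurable.comp (hmeas s))).mul
        ((((hmeas u').sub (hmeas u)).pow_const 2).sub measurable_const)).aestronglyMeasurable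
    · refine Eventually.of_forall fun ω => ?_
      rw [Real.norm_eq_abs, abs_mul, abs_mul]
      have h1 := hC (B u ω)
      have h2 := hC (B s ω)
      have h3 : (0:ℝ) ≤ |(B u' ω - B u ω)^2 - c| := abs_nonneg _
      exact mul_le_mul_of_nonneg_right
        (mul_le_mul h1 h2 (abs_nonneg _) (le_trans (abs_nonneg _) h1)) h3
  have hintφ : Integrable (φ ∘ (fun ω => B t ω - B s ω)) P := by
    have : (φ ∘ (fun ω => B t ω - B s ω)) = fun ω => (B t ω - B s ω)^2 - c := rfl
    rw [this]
    exact hint2.sub (integrable_const c)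
  have hEφ : ∫ ω, (φ ∘ (fun ω => B t ω - B s ω)) ω ∂P = 0 := by
    have : (φ ∘ (fun ω => B t ω - B s ω)) = fun ω => (B t ω - B s ω)^2 - c := rfl
    rw [this, integral_sub hint2 (integrable_const c), hmean, integral_const]
    simp
  have hmul := ProbabilityTheory.IndepFun.integral_mul_eq_mul_integral hIF hintFW.aestronglyMeasurable hintφ.aestronglyMeasurable
  have hrepr : (fun ω => (g (B u ω) * ((B u' ω - B u ω)^2 - c))
      * (g (B s ω) * ((B t ω - B s ω)^2 - c)))
      = (F ∘ W) * (φ ∘ (fun ω => B t ω - B s ω)) := by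
    funext ω
    simp only [Pi.mul_apply, hFW, hφ, Function.comp]
    ring
  rw [hrepr]
  calc ∫ ω, ((F ∘ W) * (φ ∘ (fun ω => B t ω - B s ω))) ω ∂P
      = (∫ ω, (F ∘ W) ω ∂P) * ∫ ω, (φ ∘ (fun ω => B t ω - B s ω)) ω ∂P := hmul
    _ = 0 := by rw [hEφ, mul_zero]

end BrownianAux

/-- Second-order terms along Brownian paths contribute a time integral: for a standard
Brownian motion `B` on `[0,1]` and a bounded Lipschitz `g`, the sums
`∑ g(B_{t_i})(B_{t_{i+1}} − B_{t_i})²` along the uniform partition `t_i = i/n` converge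
in `L²(P)` to `∫_0^1 g(B_t) dt`. -/
theorem second_order_sum_tendsto_time_integral_wiener
    {Ω : Type*} [MeasurableSpace Ω] (P : Measure Ω) [IsProbabilityMeasure P]
    (B : ℝ → Ω → ℝ)
    (hmeas : ∀ t, Measurable (B t))
    (hzero : ∀ᵐ ω ∂P, B 0 ω = 0)
    (hgauss : ∀ s t : ℝ, 0 ≤ s → s ≤ t → t ≤ 1 →
      Measure.map (fun ω => B t ω - B s ω) P = gaussianReal 0 (Real.toNNReal (t - s)))
    (hindep : ∀ s t : ℝ, 0 ≤ s → s ≤ t → t ≤ 1 →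
      IndepFun (fun ω => B t ω - B s ω) (fun ω => fun r : Set.Iic s => B r ω) P)
    (hcont : ∀ᵐ ω ∂P, ContinuousOn (fun t => B t ω) (Set.Icc 0 1))
    (g : ℝ → ℝ)
    (hgb : ∃ C, ∀ a, |g a| ≤ C)
    (hglip : ∃ K : ℝ, ∀ a b : ℝ, |g a - g b| ≤ K * |a - b|) :
    Tendsto (fun n : ℕ => ∫ ω,
      ((∑ i ∈ Finset.range n,
          g (B ((i : ℝ) / n) ω) * (B (((i : ℝ) + 1) / n) ω - B ((i : ℝ) / n) ω) ^ 2)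
        - ∫ t in (0:ℝ)..1, g (B t ω)) ^ 2 ∂P)
      atTop (nhds 0) := by
  classical
  obtain ⟨C, hC⟩ := hgb
  have hC0 : 0 ≤ C := le_trans (abs_nonneg _) (hC 0)
  obtain ⟨K, hK⟩ := hglip
  have hK0 : 0 ≤ K := le_trans (abs_nonneg (g 0 - g 1)) (by simpa using hK 0 1)
  have hgcont : Continuous g := by
    refine LipschitzWith.continuous (K := ⟨K, hK0⟩) ?_
    refine lipschitzWith_iff_dist_le_mul.mpr fun a b => ?_
    rw [Real.dist_eq, Real.dist_eq]
    exact hK a b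
  set S : ℕ → Ω → ℝ := fun n ω => ∑ i ∈ Finset.range n,
      g (B ((i : ℝ) / n) ω) * (B (((i : ℝ) + 1) / n) ω - B ((i : ℝ) / n) ω) ^ 2 with hSdef
  set R : ℕ → Ω → ℝ := fun n ω => ∑ i ∈ Finset.range n,
      g (B ((i : ℝ) / n) ω) * (1 / (n:ℝ)) with hRdef
  set I : Ω → ℝ := fun ω => ∫ t in (0:ℝ)..1, g (B t ω) with hIdef
  show Tendsto (fun n : ℕ => ∫ ω, (S n ω - I ω)^2 ∂P) atTop (nhds 0)
  have hSmeas : ∀ n, Measurable (S n) := fun n =>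
    Finset.measurable_sum _ fun i _ =>
      (hgcont.measurable.comp (hmeas _)).mul (((hmeas _).sub (hmeas _)).pow_const 2)
  have hRmeas : ∀ n, Measurable (R n) := fun n =>
    Finset.measurable_sum _ fun i _ => (hgcont.measurable.comp (hmeas _)).mul_const _
  have hRI : ∀ᵐ ω ∂P, Tendsto (fun n => R n ω) atTop (nhds (I ω)) := by
    filter_upwards [hcont] with ω hω
    exact riemann_sum_tendsto (hgcont.comp_continuousOn hω)
  have hImeasA : AEMeasurable I P :=
    aemeasurable_of_tendsto_metrizable_ae' (fun n => (hRmeas n).aemeasurable) hRI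
  have hRb : ∀ (n : ℕ) ω, |R n ω| ≤ C := by
    intro n ω
    by_cases hn : n = 0
    · simp [hRdef, hn, hC0]
    calc |R n ω| ≤ ∑ i ∈ Finset.range n, |g (B ((i : ℝ) / n) ω) * (1 / (n:ℝ))| := by
          rw [hRdef]; exact Finset.abs_sum_le_sum_abs _ _
      _ ≤ ∑ _i ∈ Finset.range n, C * (1 / (n:ℝ)) := by
          refine Finset.sum_le_sum fun i _ => ?_
          rw [abs_mul]
          refine mul_le_mul (hC _) ?_ (abs_nonneg _) hC0
          rw [abs_of_nonneg (by positivity)]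
      _ = C := by
          rw [Finset.sum_const, Finset.card_range, nsmul_eq_mul]
          have h : (n:ℝ) ≠ 0 := Nat.cast_ne_zero.mpr hn
          field_simp
  have hIb : ∀ ω, |I ω| ≤ C := by
    intro ω
    have h := intervalIntegral.norm_integral_le_of_norm_le_const
      (a := (0:ℝ)) (b := 1) (C := C) (f := fun t => g (B t ω))
      (fun x _ => by rw [Real.norm_eq_abs]; exact hC _)
    rw [Real.norm_eq_abs] at h
    rw [hIdef]
    simpa using h
  have hRIb : ∀ (n : ℕ) ω, ‖(R n ω - I ω)^2‖ ≤ (2*C)^2 := by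
    intro n ω
    rw [Real.norm_eq_abs, abs_of_nonneg (sq_nonneg _)]
    have h1 := abs_le.mp (hRb n ω)
    have h2 := abs_le.mp (hIb ω)
    nlinarith [h1.1, h1.2, h2.1, h2.2]
  have hRIsm : ∀ n : ℕ, AEStronglyMeasurable (fun ω => (R n ω - I ω)^2) P := fun n =>
    (((hRmeas n).aemeasurable.sub hImeasA).pow_const 2).aestronglyMeasurable
  have hRIint : ∀ n : ℕ, Integrable (fun ω => (R n ω - I ω)^2) P := fun n =>
    Integrable.mono' (integrable_const ((2*C)^2)) (hRIsm n)
      (Eventually.of_forall (hRIb n))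
  have hBterm : Tendsto (fun n : ℕ => ∫ ω, (R n ω - I ω)^2 ∂P) atTop (nhds 0) := by
    have h := tendsto_integral_of_dominated_convergence (μ := P)
      (F := fun (n : ℕ) ω => (R n ω - I ω)^2) (f := fun _ => (0:ℝ))
      (fun _ => (2*C)^2) hRIsm (integrable_const _)
      (fun n => Eventually.of_forall (hRIb n)) ?_
    · simpa using h
    · filter_upwards [hRI] with ω hω
      have h2 : Tendsto (fun n => R n ω - I ω) atTop (nhds (I ω - I ω)) := hω.sub_const _
      rw [sub_self] at h2
      simpa using h2.pow 2
  -- Term A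
  have hA : ∀ n : ℕ, 1 ≤ n →
      Integrable (fun ω => (S n ω - R n ω)^2) P ∧
      ∫ ω, (S n ω - R n ω)^2 ∂P ≤ 2*C^2/n := by
    intro n hn
    have hnpos : (0:ℝ) < n := by exact_mod_cast hn
    have hnne : (n:ℝ) ≠ 0 := ne_of_gt hnpos
    set v : NNReal := Real.toNNReal (1/(n:ℝ)) with hvdef
    have hv : v ≠ 0 := by
      rw [hvdef]
      simp only [ne_eq, Real.toNNReal_eq_zero, not_le]
      positivity
    have hvco : (v:ℝ) = 1/(n:ℝ) := Real.coe_toNNReal _ (by positivity)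
    have hfrac : ∀ i : ℕ, i < n →
        0 ≤ (i:ℝ)/n ∧ (i:ℝ)/n ≤ ((i:ℝ)+1)/n ∧ ((i:ℝ)+1)/n ≤ 1 := by
      intro i hi
      refine ⟨by positivity, ?_, ?_⟩
      · exact div_le_div_of_nonneg_right (by linarith) hnpos.le
      · rw [div_le_one hnpos]
        have : (i:ℝ) + 1 ≤ n := by exact_mod_cast Nat.succ_le_of_lt hi
        linarith
    have hmapD : ∀ i : ℕ, i < n →
        Measure.map (fun ω => B (((i:ℝ)+1)/n) ω - B ((i:ℝ)/n) ω) P = gaussianReal 0 v := by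
      intro i hi
      have h := hgauss ((i:ℝ)/n) (((i:ℝ)+1)/n) (hfrac i hi).1 (hfrac i hi).2.1 (hfrac i hi).2.2
      rw [show ((i:ℝ)+1)/n - (i:ℝ)/n = 1/(n:ℝ) from by
        rw [div_sub_div_same, add_sub_cancel_left]] at h
      rw [hvdef]
      exact h
    have hmom : ∀ i : ℕ, i < n → ∀ m : ℕ,
        Integrable (fun ω => (B (((i:ℝ)+1)/n) ω - B ((i:ℝ)/n) ω) ^ m) P
          ∧ ∫ ω, (B (((i:ℝ)+1)/n) ω - B ((i:ℝ)/n) ω) ^ m ∂P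
            = ∫ x, x ^ m ∂(gaussianReal 0 v) := by
      intro i hi m
      exact map_pow_integral P ((hmeas _).sub (hmeas _)) hv (hmapD i hi) m
    have hD2int : ∀ i : ℕ, i < n →
        Integrable (fun ω => (B (((i:ℝ)+1)/n) ω - B ((i:ℝ)/n) ω) ^ 2) P :=
      fun i hi => (hmom i hi 2).1
    have hD4int : ∀ i : ℕ, i < n →
        Integrable (fun ω => (B (((i:ℝ)+1)/n) ω - B ((i:ℝ)/n) ω) ^ 4) P :=
      fun i hi => (hmom i hi 4).1
    have hED2 : ∀ i : ℕ, i < n →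
        ∫ ω, (B (((i:ℝ)+1)/n) ω - B ((i:ℝ)/n) ω) ^ 2 ∂P = 1/(n:ℝ) := by
      intro i hi
      rw [(hmom i hi 2).2, (gauss_moments hv).1, hvco]
    have hED4 : ∀ i : ℕ, i < n →
        ∫ ω, (B (((i:ℝ)+1)/n) ω - B ((i:ℝ)/n) ω) ^ 4 ∂P = 3*(1/(n:ℝ))^2 := by
      intro i hi
      rw [(hmom i hi 4).2, (gauss_moments hv).2, hvco]
    set Y : ℕ → Ω → ℝ := fun i ω =>
      (B (((i:ℝ)+1)/n) ω - B ((i:ℝ)/n) ω)^2 - 1/(n:ℝ) with hYdef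
    set f : ℕ → Ω → ℝ := fun i ω => g (B ((i:ℝ)/n) ω) * Y i ω with hfdef
    clear_value Y f
    have hYmeas : ∀ i, Measurable (Y i) := by
      intro i
      simp only [hYdef]
      exact (((hmeas _).sub (hmeas _)).pow_const 2).sub measurable_const
    have hfmeas : ∀ i, Measurable (f i) := by
      intro i
      simp only [hfdef]
      exact (hgcont.measurable.comp (hmeas _)).mul (hYmeas i)
    have hYint : ∀ i : ℕ, i < n → Integrable (Y i) P := by
      intro i hi
      simp only [hYdef]
      exact (hD2int i hi).sub (integrable_const _)
    have hEY : ∀ i : ℕ, i < n → ∫ ω, Y i ω ∂P = 0 := by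
      intro i hi
      rw [hYdef]
      rw [integral_sub (hD2int i hi) (integrable_const _), hED2 i hi, integral_const]
      simp
    have hY2int : ∀ i : ℕ, i < n → Integrable (fun ω => (Y i ω)^2) P := by
      intro i hi
      have hexp : ∀ ω, (Y i ω)^2
          = (B (((i:ℝ)+1)/n) ω - B ((i:ℝ)/n) ω)^4
            - (2/(n:ℝ)) * (B (((i:ℝ)+1)/n) ω - B ((i:ℝ)/n) ω)^2 + (1/(n:ℝ))^2 := by
        intro ω; rw [hYdef]; ring
      exact (((hD4int i hi).sub ((hD2int i hi).const_mul _)).add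
        (integrable_const _)).congr (Eventually.of_forall fun ω => (hexp ω).symm)
    have hEY2 : ∀ i : ℕ, i < n → ∫ ω, (Y i ω)^2 ∂P = 2/(n:ℝ)^2 := by
      intro i hi
      have hexp : ∀ ω, (Y i ω)^2
          = (B (((i:ℝ)+1)/n) ω - B ((i:ℝ)/n) ω)^4
            - (2/(n:ℝ)) * (B (((i:ℝ)+1)/n) ω - B ((i:ℝ)/n) ω)^2 + (1/(n:ℝ))^2 := by
        intro ω; rw [hYdef]; ring
      rw [integral_congr_ae (Eventually.of_forall hexp)]
      have hmid : Integrable (fun ω =>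
          (B (((i:ℝ)+1)/n) ω - B ((i:ℝ)/n) ω)^4
            - (2/(n:ℝ)) * (B (((i:ℝ)+1)/n) ω - B ((i:ℝ)/n) ω)^2) P :=
        (hD4int i hi).sub ((hD2int i hi).const_mul _)
      have hmul : Integrable (fun ω =>
          (2/(n:ℝ)) * (B (((i:ℝ)+1)/n) ω - B ((i:ℝ)/n) ω)^2) P :=
        (hD2int i hi).const_mul _
      rw [integral_add hmid (integrable_const _),
        integral_sub (hD4int i hi) hmul, integral_const_mul,
        hED4 i hi, hED2 i hi, integral_const]
      simp only [measure_univ, probReal_univ, ENNReal.toReal_one, smul_eq_mul, one_mul]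
      field_simp
      ring
    have hintff : ∀ i j : ℕ, i < n → j < n →
        Integrable (fun ω => f i ω * f j ω) P := by
      intro i j hi hj
      refine Integrable.mono'
        ((((hY2int i hi).add (hY2int j hj)).div_const 2).const_mul (C^2)) ?_ ?_
      · exact ((hfmeas i).mul (hfmeas j)).aestronglyMeasurable
      · refine Eventually.of_forall fun ω => ?_
        rw [Real.norm_eq_abs, hfdef]
        simp only []
        have h1 := hC (B ((i:ℝ)/n) ω)
        have h2 := hC (B ((j:ℝ)/n) ω)
        have h3 : |Y i ω * Y j ω| ≤ ((Y i ω)^2 + (Y j ω)^2)/2 := by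
          rw [abs_mul]
          have h4 := two_mul_le_add_sq |Y i ω| |Y j ω|
          rw [sq_abs, sq_abs] at h4
          nlinarith [h4]
        have e : g (B ((i:ℝ)/n) ω) * Y i ω * (g (B ((j:ℝ)/n) ω) * Y j ω)
            = (g (B ((i:ℝ)/n) ω) * g (B ((j:ℝ)/n) ω)) * (Y i ω * Y j ω) := by ring
        rw [e, abs_mul]
        calc |g (B ((i:ℝ)/n) ω) * g (B ((j:ℝ)/n) ω)| * |Y i ω * Y j ω|
            ≤ (C*C) * (((Y i ω)^2 + (Y j ω)^2)/2) := by
              refine mul_le_mul ?_ h3 (abs_nonneg _) (by positivity)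
              rw [abs_mul]
              exact mul_le_mul h1 h2 (abs_nonneg _) hC0
          _ = C^2 * (((Y i ω)^2 + (Y j ω)^2)/2) := by ring
    have hcross' : ∀ i j : ℕ, i < j → j < n → ∫ ω, f i ω * f j ω ∂P = 0 := by
      intro i j hij hj
      have hi : i < n := lt_trans hij hj
      have hus : (i:ℝ)/n ≤ (j:ℝ)/n :=
        div_le_div_of_nonneg_right (by exact_mod_cast hij.le) hnpos.le
      have hu's : ((i:ℝ)+1)/n ≤ (j:ℝ)/n := by
        apply div_le_div_of_nonneg_right ?_ hnpos.le
        have h : (i:ℕ)+1 ≤ j := hij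
        exact_mod_cast h
      have h := cross_term_zero P B hmeas g hgcont hC hus hu's
        (hindep ((j:ℝ)/n) (((j:ℝ)+1)/n) (hfrac j hj).1 (hfrac j hj).2.1 (hfrac j hj).2.2)
        (hD2int j hj) (hED2 j hj) (hD2int i hi)
      rw [hfdef]
      simp only [hYdef]
      exact h
    have hdiag : ∀ i : ℕ, i < n → ∫ ω, f i ω * f i ω ∂P ≤ C^2 * (2/(n:ℝ)^2) := by
      intro i hi
      have hpt : ∀ ω, f i ω * f i ω ≤ C^2 * (Y i ω)^2 := by
        intro ω
        rw [hfdef]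
        simp only []
        have h1 := hC (B ((i:ℝ)/n) ω)
        have e : g (B ((i:ℝ)/n) ω) * Y i ω * (g (B ((i:ℝ)/n) ω) * Y i ω)
            = (g (B ((i:ℝ)/n) ω))^2 * (Y i ω)^2 := by ring
        rw [e]
        have hg2 : (g (B ((i:ℝ)/n) ω))^2 ≤ C^2 := by
          have := pow_le_pow_left₀ (abs_nonneg (g (B ((i:ℝ)/n) ω))) h1 2
          rwa [sq_abs] at this
        exact mul_le_mul_of_nonneg_right hg2 (sq_nonneg _)
      calc ∫ ω, f i ω * f i ω ∂P ≤ ∫ ω, C^2 * (Y i ω)^2 ∂P :=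
            integral_mono (hintff i i hi hi) ((hY2int i hi).const_mul _) hpt
        _ = C^2 * ∫ ω, (Y i ω)^2 ∂P := integral_const_mul _ _
        _ = C^2 * (2/(n:ℝ)^2) := by rw [hEY2 i hi]
    have hSR : ∀ ω, S n ω - R n ω = ∑ i ∈ Finset.range n, f i ω := by
      intro ω
      rw [hSdef, hRdef, hfdef]
      simp only [hYdef]
      rw [← Finset.sum_sub_distrib]
      exact Finset.sum_congr rfl fun i _ => by ring
    have hfun : (fun ω => (S n ω - R n ω)^2)
        = fun ω => ∑ i ∈ Finset.range n, ∑ j ∈ Finset.range n, f i ω * f j ω :=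
      funext fun ω => by rw [hSR ω, sq, Finset.sum_mul_sum]
    have hint : Integrable (fun ω => (S n ω - R n ω)^2) P := by
      rw [hfun]
      exact integrable_finset_sum _ fun i hi => integrable_finset_sum _ fun j hj =>
        hintff i j (Finset.mem_range.mp hi) (Finset.mem_range.mp hj)
    refine ⟨hint, ?_⟩
    have h1 : ∫ ω, (S n ω - R n ω)^2 ∂P
        = ∑ i ∈ Finset.range n, ∑ j ∈ Finset.range n, ∫ ω, f i ω * f j ω ∂P := by
      rw [hfun]
      rw [integral_finset_sum _ (fun i hi => integrable_finset_sum _ fun j hj =>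
        hintff i j (Finset.mem_range.mp hi) (Finset.mem_range.mp hj))]
      exact Finset.sum_congr rfl fun i hi => integral_finset_sum _ fun j hj =>
        hintff i j (Finset.mem_range.mp hi) (Finset.mem_range.mp hj)
    rw [h1]
    calc ∑ i ∈ Finset.range n, ∑ j ∈ Finset.range n, ∫ ω, f i ω * f j ω ∂P
        = ∑ i ∈ Finset.range n, ∫ ω, f i ω * f i ω ∂P := by
          refine Finset.sum_congr rfl fun i hi => ?_
          refine Finset.sum_eq_single i ?_ ?_
          · intro j hj hne
            rcases lt_or_gt_of_ne hne with h | h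
            · rw [show (fun ω => f i ω * f j ω) = fun ω => f j ω * f i ω from
                funext fun ω => mul_comm _ _]
              exact hcross' j i h (Finset.mem_range.mp hi)
            · exact hcross' i j h (Finset.mem_range.mp hj)
          · intro hni; exact (hni hi).elim
      _ ≤ ∑ _i ∈ Finset.range n, C^2 * (2/(n:ℝ)^2) :=
          Finset.sum_le_sum fun i hi => hdiag i (Finset.mem_range.mp hi)
      _ = n * (C^2 * (2/(n:ℝ)^2)) := by
          rw [Finset.sum_const, Finset.card_range, nsmul_eq_mul]
      _ = 2*C^2/n := by field_simp
  -- assembly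
  have hupper : ∀ n : ℕ, 1 ≤ n → ∫ ω, (S n ω - I ω)^2 ∂P
      ≤ 4*C^2/n + 2 * ∫ ω, (R n ω - I ω)^2 ∂P := by
    intro n hn
    obtain ⟨hSRint, hSRval⟩ := hA n hn
    have hpt : ∀ ω, (S n ω - I ω)^2 ≤ 2*(S n ω - R n ω)^2 + 2*(R n ω - I ω)^2 := by
      intro ω; nlinarith [sq_nonneg (S n ω - 2*R n ω + I ω)]
    have hrhs : Integrable (fun ω => 2*(S n ω - R n ω)^2 + 2*(R n ω - I ω)^2) P :=
      (hSRint.const_mul 2).add ((hRIint n).const_mul 2)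
    have h1 : ∫ ω, (S n ω - I ω)^2 ∂P
        ≤ ∫ ω, (2*(S n ω - R n ω)^2 + 2*(R n ω - I ω)^2) ∂P :=
      integral_mono_of_nonneg (Eventually.of_forall fun ω => sq_nonneg _) hrhs
        (Eventually.of_forall hpt)
    rw [integral_add (hSRint.const_mul 2) ((hRIint n).const_mul 2),
      integral_const_mul, integral_const_mul] at h1
    calc ∫ ω, (S n ω - I ω)^2 ∂P ≤ 2*(2*C^2/n) + 2*∫ ω, (R n ω - I ω)^2 ∂P := by linarith
      _ = 4*C^2/n + 2*∫ ω, (R n ω - I ω)^2 ∂P := by ring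
  have hU : Tendsto (fun n : ℕ => 4*C^2/n + 2 * ∫ ω, (R n ω - I ω)^2 ∂P) atTop (nhds 0) := by
    have h1 := tendsto_const_div_atTop_nhds_zero_nat (4*C^2)
    have h2 := hBterm.const_mul (2:ℝ)
    have h3 := h1.add h2
    simpa using h3
  refine tendsto_of_tendsto_of_tendsto_of_le_of_le' tendsto_const_nhds hU ?_ ?_
  · exact Eventually.of_forall fun n => integral_nonneg fun ω => sq_nonneg _
  · filter_upwards [eventually_ge_atTop 1] with n hn
    exact hupper n hn
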